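/- arXiv:1306.3726 — 3 statements merged into one kernel-verified Lean document; each statement's English description precedes it below -/
import Mathlib

section
/- Let Σ = {0,1,2} and let f be the function with f(ε) = ε and f(x₁x₂…x_{k−1}x_k) = x_k x₂…x_{k−1} x₁ for every non-empty word (exchanging the first and last symbol). Then every deterministic position-faithful one-tape Turing machine computing f has, for each n ≥ 2, some input x of length n on which its runtime is at least 2·|x|. -/
open Classical

/-- A set of strings is regular iff it is accepted by a deterministic finite automaton. -/
def IsRegularLang {γ : Type} (P : Set (List γ)) : Prop :=
  ∃ (Q : Type) (_ : Fintype Q) (M : DFA γ Q), ∀ w, w ∈ M.accepts ↔ w ∈ P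

/-- The convolution of two strings, padding the shorter one with `none` (the symbol □). -/
def convP {α β : Type} (x : List α) (y : List β) : List (Option α × Option β) :=
  (List.range (max x.length y.length)).map fun i => (x[i]?, y[i]?)

/-- Convolution padded with `(none, none)` up to a prescribed length `L`
(this is the convolution of `x·□^*` and `y·□^*`, both padded to length `L`). -/
def convPad {α β : Type} (x : List α) (y : List β) (L : ℕ) : List (Option α × Option β) :=
  (List.range L).map fun i => (x[i]?, y[i]?)

/-- The convolution of three strings. -/
def conv3 {α β γ : Type} (x : List α) (y : List β) (z : List γ) :
    List (Option α × Option β × Option γ) :=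
  (List.range (max x.length (max y.length z.length))).map fun i =>
    (x[i]?, y[i]?, z[i]?)

/-- The convolution of four strings. -/
def conv4 {α β γ δ : Type} (a : List α) (b : List β) (c : List γ) (d : List δ) :
    List (Option α × Option β × Option γ × Option δ) :=
  (List.range (max (max a.length b.length) (max c.length d.length))).map fun i =>
    (a[i]?, b[i]?, (c)[i]?, d[i]?)

/-- A partial function on strings is automatic iff its graph of convolutions is regular. -/
def IsAutomatic {α β : Type} (f : List α → Option (List β)) : Prop :=
  IsRegularLang { w | ∃ x y, f x = some y ∧ w = convP x y }

/-- Tape symbols: the left-end marker ⊞, the blank □, or an alphabet symbol. -/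
inductive TSym (Γ : Type) : Type
  | lend : TSym Γ
  | blank : TSym Γ
  | sym : Γ → TSym Γ

/-- Head movement: `true` = one cell to the right, `false` = one cell to the left
(capped at cell 0). -/
def tmove (b : Bool) (h : ℕ) : ℕ := if b then h + 1 else h - 1

/-- The tape holding ⊞ w □ □ ⋯ -/
def listTape {Γ : Type} (w : List Γ) : ℕ → TSym Γ
  | 0 => TSym.lend
  | n + 1 =>
    match w[n]? with
    | some a => TSym.sym a
    | none => TSym.blank

/-- The tape `t` starts with ⊞ w □ (the content beyond the first blank is unconstrained). -/
def TapeStartsWith {Γ : Type} (t : ℕ → TSym Γ) (w : List Γ) : Prop :=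
  t 0 = TSym.lend ∧ (∀ i : Fin w.length, t (i.1 + 1) = TSym.sym (w.get i)) ∧
    t (w.length + 1) = TSym.blank

/-- A configuration of a one-tape Turing machine. -/
structure TMConfig (Q Γ : Type) where
  state : Q
  head : ℕ
  tape : ℕ → TSym Γ

/-- A deterministic position-faithful one-tape Turing machine with input alphabet `α`,
output alphabet `β` and (finite) working alphabet `Γ` into which both embed.  The
left-end marker ⊞ occurs exactly at cell 0: it can never be modified (the head moves
right on reading it) and it is never written elsewhere. -/
structure DPFTM (α β Γ : Type) where
  Q : Type
  finQ : Fintype Q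
  finΓ : Fintype Γ
  inputEmb : α → Γ
  outputEmb : β → Γ
  inputInj : Function.Injective inputEmb
  outputInj : Function.Injective outputEmb
  init : Q
  accept : Q
  reject : Q
  δ : Q → TSym Γ → Q × TSym Γ × Bool
  faithful_end : ∀ q, (δ q TSym.lend).2.1 = TSym.lend ∧ (δ q TSym.lend).2.2 = true
  faithful_noend : ∀ q a, a ≠ TSym.lend → (δ q a).2.1 ≠ TSym.lend

namespace DPFTM

def step {α β Γ : Type} (M : DPFTM α β Γ) (c : TMConfig M.Q Γ) : TMConfig M.Q Γ :=
  ⟨(M.δ c.state (c.tape c.head)).1,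
   tmove (M.δ c.state (c.tape c.head)).2.2 c.head,
   Function.update c.tape c.head (M.δ c.state (c.tape c.head)).2.1⟩

/-- The initial configuration on input `x`: tape ⊞ x □ □ ⋯, head on ⊞. -/
def initConfig {α β Γ : Type} (M : DPFTM α β Γ) (x : List α) : TMConfig M.Q Γ :=
  ⟨M.init, 0, listTape (x.map M.inputEmb)⟩

/-- The configuration after `n` steps on input `x`. -/
def conf {α β Γ : Type} (M : DPFTM α β Γ) (x : List α) (n : ℕ) : TMConfig M.Q Γ :=
  M.step^[n] (M.initConfig x)

/-- The machine has halted (in the accepting or in the rejecting state). -/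
def Halted {α β Γ : Type} (M : DPFTM α β Γ) (c : TMConfig M.Q Γ) : Prop :=
  c.state = M.accept ∨ c.state = M.reject

/-- On input `x` the machine halts, accepting, after exactly `n` steps. -/
def HaltsAcceptAt {α β Γ : Type} (M : DPFTM α β Γ) (x : List α) (n : ℕ) : Prop :=
  (M.conf x n).state = M.accept ∧ ∀ m < n, ¬ M.Halted (M.conf x m)

/-- `M` computes the partial function `f`: for every `x`, `f x = some y` iff `M`,
started on ⊞ x □ □ ⋯, eventually halts in the accepting state with tape content
starting with ⊞ y □. -/
def Computes {α β Γ : Type} (M : DPFTM α β Γ) (f : List α → Option (List β)) : Prop :=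
  ∀ x y, f x = some y ↔
    ∃ n, M.HaltsAcceptAt x n ∧ TapeStartsWith (M.conf x n).tape (y.map M.outputEmb)

/-- There is a constant `c` such that on every input `x` the computation lasts at most
`c·(|x|+1)` steps. -/
def LinearTime {α β Γ : Type} (M : DPFTM α β Γ) : Prop :=
  ∃ c : ℕ, ∀ x : List α, ∃ n ≤ c * (x.length + 1), M.Halted (M.conf x n)

end DPFTM

/-- A non-deterministic position-faithful one-tape Turing machine. -/
structure NPFTM (α β Γ : Type) where
  Q : Type
  finQ : Fintype Q
  finΓ : Fintype Γ
  inputEmb : α → Γ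
  outputEmb : β → Γ
  inputInj : Function.Injective inputEmb
  outputInj : Function.Injective outputEmb
  init : Q
  accept : Q
  reject : Q
  δ : Q → TSym Γ → Set (Q × TSym Γ × Bool)
  faithful_end : ∀ q t, t ∈ δ q TSym.lend → t.2.1 = TSym.lend ∧ t.2.2 = true
  faithful_noend : ∀ q a t, a ≠ TSym.lend → t ∈ δ q a → t.2.1 ≠ TSym.lend

namespace NPFTM

/-- The one-step relation between configurations. -/
def StepRel {α β Γ : Type} (M : NPFTM α β Γ) (c c' : TMConfig M.Q Γ) : Prop :=
  ∃ t ∈ M.δ c.state (c.tape c.head),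
    c' = ⟨t.1, tmove t.2.2 c.head, Function.update c.tape c.head t.2.1⟩

def initConfig {α β Γ : Type} (M : NPFTM α β Γ) (x : List α) : TMConfig M.Q Γ :=
  ⟨M.init, 0, listTape (x.map M.inputEmb)⟩

def Halted {α β Γ : Type} (M : NPFTM α β Γ) (c : TMConfig M.Q Γ) : Prop :=
  c.state = M.accept ∨ c.state = M.reject

/-- `p` is a computation (run) of length `n` of `M` on input `x`: it starts in the
initial configuration, performs `n` steps, and does not halt before step `n`. -/
def IsRun {α β Γ : Type} (M : NPFTM α β Γ) (x : List α) (p : ℕ → TMConfig M.Q Γ)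
    (n : ℕ) : Prop :=
  p 0 = M.initConfig x ∧ ∀ i < n, ¬ M.Halted (p i) ∧ M.StepRel (p i) (p (i + 1))

/-- `M` computes the partial function `f`: `f x = some y` iff some computation of `M`
on `x` halts accepting with tape content starting ⊞ y □.  (In particular any two
accepting computations on the same input produce the same output.) -/
def Computes {α β Γ : Type} (M : NPFTM α β Γ) (f : List α → Option (List β)) : Prop :=
  ∀ x y, f x = some y ↔
    ∃ (p : ℕ → TMConfig M.Q Γ) (n : ℕ), M.IsRun x p n ∧ (p n).state = M.accept ∧
      TapeStartsWith (p n).tape (y.map M.outputEmb)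

/-- Every computation (accepting or not) on input `x` lasts at most `c·(|x|+1)` steps. -/
def LinearTime {α β Γ : Type} (M : NPFTM α β Γ) : Prop :=
  ∃ c : ℕ, ∀ (x : List α) (p : ℕ → TMConfig M.Q Γ) (n : ℕ),
    M.IsRun x p n → n ≤ c * (x.length + 1)

end NPFTM

/-- The length of the longest datum among `T 0, …, T n`. -/
def maxLen {σ : Type} (T : ℕ → List σ) (n : ℕ) : ℕ :=
  (Finset.range (n + 1)).sup fun i => (T i).length

/-- `T` is a text for the language `Lang`: it enumerates exactly the elements of `Lang`. -/
def IsTextFor {σ : Type} (T : ℕ → List σ) (Lang : Set (List σ)) : Prop :=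
  Set.range T = Lang

/-- An automatic family of (nonempty) languages over the alphabet `σ`, indexed by a
regular set of strings over the alphabet `ι`. -/
structure AutoFam (ι σ : Type) [Fintype ι] [Fintype σ] where
  Idx : Set (List ι)
  L : List ι → Set (List σ)
  regIdx : IsRegularLang Idx
  regFam : IsRegularLang { w | ∃ e x, e ∈ Idx ∧ x ∈ L e ∧ w = convP e x }
  nonemptyL : ∀ e ∈ Idx, (L e).Nonempty

/-- An abstract learner: it maps (old memory, new datum) to (new memory, conjecture),
starting from a fixed initial memory. -/
structure PLearner (σ μ ι : Type) where
  minit : List μ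
  lstep : List μ → List σ → List μ × List ι

namespace PLearner

/-- The memory of the learner after having processed `T 0, …, T (n-1)`. -/
def mem {σ μ ι : Type} (M : PLearner σ μ ι) (T : ℕ → List σ) : ℕ → List μ
  | 0 => M.minit
  | n + 1 => (M.lstep (PLearner.mem M T n) (T n)).1

/-- The conjecture of the learner after having processed `T 0, …, T n`. -/
def hyp {σ μ ι : Type} (M : PLearner σ μ ι) (T : ℕ → List σ) (n : ℕ) : List ι :=
  (M.lstep (M.mem T n) (T n)).2

/-- The learner is automatic: the graph of its update function, as a set of
convolutions, is regular. -/
def Automatic {σ μ ι : Type} [Fintype σ] [Fintype μ] [Fintype ι]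
    (M : PLearner σ μ ι) : Prop :=
  IsRegularLang { w | ∃ om dat, w = conv4 om dat (M.lstep om dat).1 (M.lstep om dat).2 }

/-- The memory of the learner is bounded in length by the length of the longest datum
seen so far plus a constant. -/
def MemBounded {σ μ ι : Type} (M : PLearner σ μ ι) : Prop :=
  ∃ c : ℕ, ∀ (T : ℕ → List σ) (n : ℕ), (M.mem T (n + 1)).length ≤ maxLen T n + c

/-- The learner learns the family `(Idx, L)`: on every text for some `L e₀` with
`e₀ ∈ Idx`, its conjectures converge to a fixed index `e ∈ Idx` with `L e = L e₀`. -/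
def Learns {σ μ ι : Type} (M : PLearner σ μ ι)
    (Idx : Set (List ι)) (L : List ι → Set (List σ)) : Prop :=
  ∀ e₀ ∈ Idx, ∀ T : ℕ → List σ, IsTextFor T (L e₀) →
    ∃ e ∈ Idx, L e = L e₀ ∧ ∃ N, ∀ n ≥ N, M.hyp T n = e

end PLearner

/-- An unrestricted learner whose long-term memory is an arbitrary natural number. -/
structure RecLearner (σ ι : Type) where
  minit : ℕ
  lstep : ℕ × List σ → ℕ × List ι

namespace RecLearner

def mem {σ ι : Type} (M : RecLearner σ ι) (T : ℕ → List σ) : ℕ → ℕ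
  | 0 => M.minit
  | n + 1 => (M.lstep (RecLearner.mem M T n, T n)).1

def hyp {σ ι : Type} (M : RecLearner σ ι) (T : ℕ → List σ) (n : ℕ) : List ι :=
  (M.lstep (M.mem T n, T n)).2

/-- The learner is recursive: its update function is computable. -/
def Recursive {σ ι : Type} [Primcodable σ] [Primcodable ι] (M : RecLearner σ ι) : Prop :=
  Computable M.lstep

def Learns {σ ι : Type} (M : RecLearner σ ι)
    (Idx : Set (List ι)) (L : List ι → Set (List σ)) : Prop :=
  ∀ e₀ ∈ Idx, ∀ T : ℕ → List σ, IsTextFor T (L e₀) →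
    ∃ e ∈ Idx, L e = L e₀ ∧ ∃ N, ∀ n ≥ N, M.hyp T n = e

end RecLearner

/-- The function exchanging the first and the last symbol of a word. -/
def swapFL {σ : Type} : List σ → List σ
  | [] => []
  | [a] => [a]
  | a :: b :: rest =>
    (b :: rest).getLast (List.cons_ne_nil b rest) :: ((b :: rest).dropLast ++ [a])

section Aux

namespace DPFTM

variable {α β Γ : Type} (M : DPFTM α β Γ)

lemma conf_succ' (x : List α) (t : ℕ) : M.conf x (t+1) = M.step (M.conf x t) :=
  Function.iterate_succ_apply' _ _ _

lemma head_succ_le' (x : List α) (t : ℕ) :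
    (M.conf x (t+1)).head ≤ (M.conf x t).head + 1 ∧
    (M.conf x t).head ≤ (M.conf x (t+1)).head + 1 := by
  rw [conf_succ']
  unfold step tmove
  dsimp only
  split <;> omega

lemma head_le' (x : List α) (t : ℕ) : (M.conf x t).head ≤ t := by
  induction t with
  | zero => exact le_refl 0
  | succ t ih => have := (M.head_succ_le' x t).1; omega

lemma head_back' (x : List α) (t k : ℕ) :
    (M.conf x t).head ≤ (M.conf x (t+k)).head + k := by
  induction k with
  | zero => simp
  | succ k ih =>
    have h2 : t + (k+1) = (t+k) + 1 := rfl
    rw [h2]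
    have := (M.head_succ_le' x (t+k)).2
    omega

lemma tape_step_ne' (c : TMConfig M.Q Γ) (k : ℕ) (h : k ≠ c.head) :
    (M.step c).tape k = c.tape k := Function.update_of_ne h _ _

lemma tape_no_visit' (x : List α) (u d k : ℕ)
    (h : ∀ w, u ≤ w → w < u + d → (M.conf x w).head ≠ k) :
    (M.conf x (u+d)).tape k = (M.conf x u).tape k := by
  induction d with
  | zero => rfl
  | succ d ih =>
    have h1 : u + (d+1) = (u+d) + 1 := rfl
    rw [h1, conf_succ', tape_step_ne']
    · exact ih (fun w hw hw' => h w hw (by omega))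
    · exact fun hk => h (u+d) (by omega) (by omega) hk.symm

lemma exists_visit' (x : List α) (u v k : ℕ) (huv : u ≤ v)
    (h : (M.conf x v).tape k ≠ (M.conf x u).tape k) :
    ∃ w, u ≤ w ∧ w < v ∧ (M.conf x w).head = k := by
  by_contra hc
  push_neg at hc
  obtain ⟨d, rfl⟩ := Nat.exists_eq_add_of_le huv
  exact h (M.tape_no_visit' x u d k (fun w hw hw' => hc w hw hw'))

lemma agree' (x x' : List α) (n : ℕ)
    (h0 : ∀ k, k ≠ n → listTape (x.map M.inputEmb) k = listTape (x'.map M.inputEmb) k) :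
    ∀ t, (∀ s, s < t → (M.conf x s).head ≠ n) →
      (M.conf x t).state = (M.conf x' t).state ∧
      (M.conf x t).head = (M.conf x' t).head ∧
      ∀ k, k ≠ n → (M.conf x t).tape k = (M.conf x' t).tape k := by
  intro t
  induction t with
  | zero => exact fun _ => ⟨rfl, rfl, h0⟩
  | succ t ih =>
    intro h
    obtain ⟨hs, hh, ht⟩ := ih (fun s hs' => h s (by omega))
    have hhead : (M.conf x t).head ≠ n := h t (by omega)
    have hread : (M.conf x t).tape (M.conf x t).head
        = (M.conf x' t).tape (M.conf x' t).head := by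
      rw [← hh]; exact ht _ hhead
    refine ⟨?_, ?_, ?_⟩
    · rw [conf_succ', conf_succ']
      unfold step
      dsimp only
      rw [hs, hread]
    · rw [conf_succ', conf_succ']
      unfold step
      dsimp only
      rw [hs, hread, hh]
    · intro k hk
      rw [conf_succ', conf_succ']
      unfold step
      dsimp only
      by_cases hkh : k = (M.conf x t).head
      · subst hkh
        rw [Function.update_self, hs, hread, hh, Function.update_self]
      · rw [Function.update_of_ne hkh, Function.update_of_ne (by rw [← hh]; exact hkh),
          ht k hk]

end DPFTM

lemma swapFL_concat' {σ : Type} (a b : σ) (l : List σ) :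
    swapFL (a :: (l ++ [b])) = b :: (l ++ [a]) := by
  cases l with
  | nil => simp [swapFL]
  | cons c l' =>
    show swapFL (a :: (c :: (l' ++ [b]))) = _
    simp [swapFL, List.getLast_append]
    rw [show c :: (l' ++ [b]) = (c :: l') ++ [b] from rfl, List.dropLast_concat]
    rfl

lemma get?_rep_app' {γ : Type} (c u : γ) :
    ∀ (L j : ℕ), j ≠ L →
      (List.replicate L c ++ [u])[j]? = if j < L then some c else none := by
  intro L
  induction L with
  | zero =>
    intro j hj
    match j, hj with
    | j+1, _ => simp
  | succ L ih =>
    intro j hj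
    match j with
    | 0 => simp [List.replicate_succ]
    | j+1 =>
      have : (List.replicate (L+1) c ++ [u])[j+1]?
          = (List.replicate L c ++ [u])[j]? := by
        simp [List.replicate_succ]
      rw [this, ih j (by omega)]
      by_cases h : j < L
      · simp [h]
      · simp [h]

end Aux

lemma listTape_succ' {γ : Type} (w : List γ) (k : ℕ) :
    listTape w (k+1) = (match w[k]? with
      | some a => TSym.sym a
      | none => TSym.blank) := rfl

lemma listTape_rep_last {γ : Type} (c u : γ) (L : ℕ) :
    listTape (List.replicate L c ++ [u]) (L + 1) = TSym.sym u := by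
  rw [listTape_succ']
  have h : (List.replicate L c ++ [u])[L]? = some u := by simp
  rw [h]

lemma listTape_rep_indep {γ : Type} (c u v : γ) (L k : ℕ) (hk : k ≠ L + 1) :
    listTape (List.replicate L c ++ [u]) k = listTape (List.replicate L c ++ [v]) k := by
  match k with
  | 0 => rfl
  | k+1 =>
    rw [listTape_succ', listTape_succ', get?_rep_app' c u L k (by omega),
      get?_rep_app' c v L k (by omega)]

lemma TSW_get {Γ : Type} (t : ℕ → TSym Γ) (w : List Γ) (h : TapeStartsWith t w)
    (j : ℕ) (a : Γ) (hj : w[j]? = some a) : t (j + 1) = TSym.sym a := by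
  have hjl : j < w.length := by
    by_contra hc
    rw [List.getElem?_eq_none (by omega)] at hj
    exact nomatch hj
  have h2 := h.2.1 ⟨j, hjl⟩
  rw [List.getElem?_eq_getElem hjl] at hj
  have h3 : w.get ⟨j, hjl⟩ = a := Option.some.inj hj
  rw [h3] at h2
  exact h2

theorem stmt4' {Γ : Type} (M : DPFTM (Fin 3) (Fin 3) Γ)
    (hco : M.Computes fun x => some (swapFL x)) :
    ∀ n, 2 ≤ n → ∃ x : List (Fin 3), x.length = n ∧
      ∀ m, M.Halted (M.conf x m) → (∀ j < m, ¬ M.Halted (M.conf x j)) →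
        2 * x.length ≤ m := by
  intro n hn
  obtain ⟨m, rfl⟩ : ∃ m, n = m + 2 := ⟨n - 2, by omega⟩
  classical
  set X : Fin 3 → List (Fin 3) := fun a => List.replicate (m + 1) 0 ++ [a] with hX
  have hXlen : ∀ a : Fin 3, (X a).length = m + 2 := by
    intro a; simp only [hX]; simp
  have hmapX : ∀ a : Fin 3, (X a).map M.inputEmb
      = List.replicate (m+1) (M.inputEmb 0) ++ [M.inputEmb a] := by
    intro a; simp only [hX]; simp
  have hswap : ∀ a : Fin 3, swapFL (X a) = a :: (List.replicate m (0:Fin 3) ++ [0]) := by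
    intro a
    simp only [hX]
    rw [show List.replicate (m+1) (0:Fin 3) ++ [a]
        = 0 :: (List.replicate m (0:Fin 3) ++ [a]) from rfl]
    exact swapFL_concat' _ _ _
  have hmapY : ∀ a : Fin 3, (a :: (List.replicate m (0:Fin 3) ++ [0])).map M.outputEmb
      = M.outputEmb a :: (List.replicate m (M.outputEmb 0) ++ [M.outputEmb 0]) := by
    intro a; simp
  have hget0 : ∀ a : Fin 3,
      ((a :: (List.replicate m (0:Fin 3) ++ [0])).map M.outputEmb)[0]?
        = some (M.outputEmb a) := by
    intro a; rw [hmapY a]; rfl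
  have hgetN : ∀ a : Fin 3,
      ((a :: (List.replicate m (0:Fin 3) ++ [0])).map M.outputEmb)[m+1]?
        = some (M.outputEmb 0) := by
    intro a
    rw [hmapY a]
    show (List.replicate m (M.outputEmb 0) ++ [M.outputEmb 0])[m]? = some (M.outputEmb 0)
    simp
  have hrun : ∀ a : Fin 3, ∃ k, M.HaltsAcceptAt (X a) k ∧
      TapeStartsWith (M.conf (X a) k).tape
        ((a :: (List.replicate m (0:Fin 3) ++ [0])).map M.outputEmb) := by
    intro a
    have h := (hco (X a) (swapFL (X a))).mp rfl
    rwa [hswap a] at h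
  have hinit : ∀ a : Fin 3, (M.conf (X a) 0).tape (m+2) = TSym.sym (M.inputEmb a) := by
    intro a
    show listTape ((X a).map M.inputEmb) (m+2) = _
    rw [hmapX a]
    exact listTape_rep_last _ _ (m+1)
  have h0 : ∀ a b : Fin 3, ∀ k, k ≠ m+2 →
      listTape ((X a).map M.inputEmb) k = listTape ((X b).map M.inputEmb) k := by
    intro a b k hk
    rw [hmapX a, hmapX b]
    exact listTape_rep_indep _ _ _ (m+1) k (by omega)
  obtain ⟨m0, hA0, hT0⟩ := hrun 0
  by_cases hvis : ∃ s, s < m0 ∧ (M.conf (X 0) s).head = m + 2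
  · -- the head visits the last input cell at some time t ≥ m+2
    obtain ⟨s0, hs0lt, hs0⟩ := hvis
    have hex : ∃ s, (M.conf (X 0) s).head = m + 2 := ⟨s0, hs0⟩
    set t := Nat.find hex with htdef
    have ht : (M.conf (X 0) t).head = m + 2 := Nat.find_spec hex
    have htmin : ∀ s, s < t → (M.conf (X 0) s).head ≠ m + 2 :=
      fun s hs => Nat.find_min hex hs
    have htm0 : t < m0 := lt_of_le_of_lt (Nat.find_min' hex hs0) hs0lt
    have htge : m + 2 ≤ t := by
      have := M.head_le' (X 0) t
      omega
    obtain ⟨a, ha⟩ : ∃ a : Fin 3, TSym.sym (M.outputEmb a) ≠ (M.conf (X 0) t).tape 1 := by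
      by_cases h : TSym.sym (M.outputEmb 0) = (M.conf (X 0) t).tape 1
      · refine ⟨1, ?_⟩
        rw [← h]
        intro hc
        exact absurd (M.outputInj (TSym.sym.inj hc)) (by decide)
      · exact ⟨0, h⟩
    obtain ⟨ma, hAa, hTa⟩ := hrun a
    have hag := M.agree' (X 0) (X a) (m+2) (h0 0 a)
    have hpre : ∀ t' ≤ t, ∀ s, s < t' → (M.conf (X 0) s).head ≠ m + 2 :=
      fun t' ht' s hs => htmin s (by omega)
    have hhd : (M.conf (X a) t).head = m + 2 := by
      rw [← (hag t (hpre t le_rfl)).2.1]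
      exact ht
    have htp1 : (M.conf (X a) t).tape 1 = (M.conf (X 0) t).tape 1 :=
      ((hag t (hpre t le_rfl)).2.2 1 (by omega)).symm
    have hnh : ∀ t' ≤ t, ¬ M.Halted (M.conf (X a) t') := by
      intro t' ht' hH
      apply hA0.2 t' (by omega)
      unfold DPFTM.Halted at hH ⊢
      rw [(hag t' (hpre t' ht')).1]
      exact hH
    have hta : t < ma := by
      rcases le_or_gt ma t with h | h
      · exact absurd (Or.inl hAa.1) (hnh ma h)
      · exact h
    have hne : (M.conf (X a) ma).tape 1 ≠ (M.conf (X a) t).tape 1 := by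
      rw [htp1, show (M.conf (X a) ma).tape 1 = TSym.sym (M.outputEmb a) from
        TSW_get _ _ hTa 0 _ (hget0 a)]
      exact ha
    obtain ⟨w, hw1, hw2, hw3⟩ := M.exists_visit' (X a) t ma 1 (le_of_lt hta) hne
    have hd := M.head_back' (X a) t (w - t)
    rw [show t + (w - t) = w from by omega, hhd, hw3] at hd
    refine ⟨X a, hXlen a, ?_⟩
    intro m' hH hmin
    have hma : m' = ma := by
      rcases lt_trichotomy m' ma with h | h | h
      · exact absurd hH (hAa.2 m' h)
      · exact h
      · exact absurd (Or.inl hAa.1) (hmin ma h)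
    rw [hXlen a, hma]
    omega
  · -- impossible: the last cell is never visited
    exfalso
    push_neg at hvis
    have e0 : (M.conf (X 0) m0).tape (m+2) = TSym.sym (M.inputEmb 0) := by
      have h := M.tape_no_visit' (X 0) 0 m0 (m+2) (fun u _ hu => hvis u (by omega))
      rw [show (0:ℕ) + m0 = m0 from by omega] at h
      rw [h]
      exact hinit 0
    have f0 : (M.conf (X 0) m0).tape (m+2) = TSym.sym (M.outputEmb 0) :=
      TSW_get _ _ hT0 (m+1) _ (hgetN 0)
    obtain ⟨m1, hA1, hT1⟩ := hrun 1
    have hag := M.agree' (X 0) (X 1) (m+2) (h0 0 1)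
    have hagt : ∀ t' ≤ m0, (M.conf (X 0) t').state = (M.conf (X 1) t').state ∧
        (M.conf (X 0) t').head = (M.conf (X 1) t').head :=
      fun t' ht' =>
        ⟨(hag t' (fun s hs => hvis s (by omega))).1,
         (hag t' (fun s hs => hvis s (by omega))).2.1⟩
    have hacc1 : (M.conf (X 1) m0).state = M.accept := by
      rw [← (hagt m0 le_rfl).1]
      exact hA0.1
    have hnh1 : ∀ j, j < m0 → ¬ M.Halted (M.conf (X 1) j) := by
      intro j hj hH
      apply hA0.2 j hj
      unfold DPFTM.Halted at hH ⊢
      rw [(hagt j (le_of_lt hj)).1]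
      exact hH
    have hm10 : m1 = m0 := by
      rcases lt_trichotomy m1 m0 with h | h | h
      · exact absurd (Or.inl hA1.1) (hnh1 m1 h)
      · exact h
      · exact absurd (Or.inl hacc1) (hA1.2 m0 h)
    have hnv1 : ∀ s, s < m0 → (M.conf (X 1) s).head ≠ m + 2 := by
      intro s hs
      rw [← (hagt s (le_of_lt hs)).2]
      exact hvis s hs
    have e1 : (M.conf (X 1) m0).tape (m+2) = TSym.sym (M.inputEmb 1) := by
      have h := M.tape_no_visit' (X 1) 0 m0 (m+2) (fun u _ hu => hnv1 u (by omega))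
      rw [show (0:ℕ) + m0 = m0 from by omega] at h
      rw [h]
      exact hinit 1
    have f1 : (M.conf (X 1) m1).tape (m+2) = TSym.sym (M.outputEmb 0) :=
      TSW_get _ _ hT1 (m+1) _ (hgetN 1)
    rw [hm10] at f1
    have hin01 : M.inputEmb 0 = M.inputEmb 1 :=
      TSym.sym.inj (by rw [← e0, f0, ← f1, e1])
    exact absurd (M.inputInj hin01) (by decide)

/-- every deterministic position-faithful one-tape Turing machine
computing the first-last-exchange function over `Σ = {0,1,2}` has, for each `n ≥ 2`,
some input `x` of length `n` on which its runtime is at least `2·|x|`. -/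
theorem stmt4 {Γ : Type} (M : DPFTM (Fin 3) (Fin 3) Γ)
    (hco : M.Computes fun x => some (swapFL x)) :
    ∀ n, 2 ≤ n → ∃ x : List (Fin 3), x.length = n ∧
      ∀ m, M.Halted (M.conf x m) → (∀ j < m, ¬ M.Halted (M.conf x j)) →
        2 * x.length ≤ m :=
  stmt4' M hco
end

section
/- The automatic family of all strings of length different from the index, given by I = {0}* and L_e = {x ∈ Σ* : |x| ≠ |e|}, is learnable by an automatic learner whose memory is bounded in length by the length of the longest datum seen so far plus a constant; such a learner can maintain as memory a binary string whose k-th bit records whether an example of length k has been seen, and conjecture 0^h for the least h such that no example of length h has been seen. -/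
open Classical

namespace Stmt9

/-- The `k`-th bit of the new memory: old bit (default false) or `k = ℓ`. -/
def bit (om : List Bool) (ℓ k : ℕ) : Bool := ((om[k]?).getD false) || decide (k = ℓ)

/-- The new memory bitmap. -/
def nmem (om : List Bool) (ℓ : ℕ) : List Bool :=
  (List.range (max om.length (ℓ + 1))).map (bit om ℓ)

/-- The conjectured length: least index with a false bit, or the bitmap length. -/
def hix (om : List Bool) (ℓ : ℕ) : ℕ := (nmem om ℓ).findIdx (fun b => !b)

lemma nmem_length (om : List Bool) (ℓ : ℕ) : (nmem om ℓ).length = max om.length (ℓ + 1) := by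
  simp [nmem]

lemma nmem_get? (om : List Bool) (ℓ k : ℕ) (hk : k < max om.length (ℓ + 1)) :
    (nmem om ℓ)[k]? = some (bit om ℓ k) := by
  simp [nmem, List.getElem?_map, List.getElem?_range hk]

lemma nmem_getElem (om : List Bool) (ℓ k : ℕ) (hk : k < (nmem om ℓ).length) :
    (nmem om ℓ)[k] = bit om ℓ k := by
  have h2 := nmem_get? om ℓ k (by simpa [nmem_length] using hk)
  rw [List.getElem?_eq_getElem hk] at h2
  exact Option.some_injective _ h2

lemma hix_le (om : List Bool) (ℓ : ℕ) : hix om ℓ ≤ max om.length (ℓ + 1) := by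
  rw [← nmem_length om ℓ]; exact List.findIdx_le_length

lemma lt_hix_iff (om : List Bool) (ℓ k : ℕ) (hk : k < max om.length (ℓ + 1)) :
    k < hix om ℓ ↔ ∀ j ≤ k, bit om ℓ j = true := by
  constructor
  · intro h j hj
    have hjlen : j < (nmem om ℓ).length := by rw [nmem_length]; omega
    have := List.not_of_lt_findIdx (p := fun b => !b) (xs := nmem om ℓ) (lt_of_le_of_lt hj h)
    rw [nmem_getElem om ℓ j hjlen] at this
    simpa using this
  · intro h
    by_contra hc
    push_neg at hc
    have hlt : hix om ℓ < (nmem om ℓ).length := by rw [nmem_length]; omega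
    have hthis : (!(nmem om ℓ)[hix om ℓ]'hlt) = true :=
      List.findIdx_getElem (p := fun b => !b) (xs := nmem om ℓ) (w := hlt)
    rw [nmem_getElem om ℓ _ hlt] at hthis
    have h2 := h (hix om ℓ) hc
    simp [h2] at hthis


/-- The learner: memory is the bitmap, conjecture is `0^h` for the least unseen length. -/
def learner (σ : Type) : PLearner σ Bool Unit :=
  ⟨[], fun om dat => (nmem om dat.length, List.replicate (hix om dat.length) ())⟩

lemma maxLen_zero {σ : Type} (T : ℕ → List σ) : maxLen T 0 = (T 0).length := by
  simp [maxLen]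

lemma maxLen_succ {σ : Type} (T : ℕ → List σ) (n : ℕ) :
    maxLen T (n + 1) = max (T (n + 1)).length (maxLen T n) := by
  simp [maxLen, Finset.range_add_one, Finset.sup_insert]

lemma len_le_maxLen {σ : Type} (T : ℕ → List σ) {i n : ℕ} (h : i ≤ n) :
    (T i).length ≤ maxLen T n :=
  Finset.le_sup (f := fun i => (T i).length) (Finset.mem_range.2 (Nat.lt_succ_of_le h))

lemma mem_formula {σ : Type} (T : ℕ → List σ) (n : ℕ) :
    (learner σ).mem T (n + 1) = (List.range (maxLen T n + 1)).map
      (fun k => if ∃ i, i ≤ n ∧ (T i).length = k then true else false) := by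
  induction n with
  | zero =>
    show nmem [] (T 0).length = _
    rw [maxLen_zero, nmem]
    apply List.map_congr_left
    intro k _
    simp only [bit]
    by_cases h : k = (T 0).length
    · simp [h, show ∃ i, i ≤ 0 ∧ (T i).length = k from ⟨0, le_refl 0, h.symm⟩]
    · simp only [decide_eq_false h]
      have : ¬ ∃ i, i ≤ 0 ∧ (T i).length = k := by
        rintro ⟨i, hi, hl⟩; interval_cases i; exact h hl.symm
      simp [this, h]
      exact fun hh => h hh.symm
  | succ n ih =>
    show nmem ((learner σ).mem T (n + 1)) (T (n + 1)).length = _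
    rw [ih, nmem]
    have hlen : ((List.range (maxLen T n + 1)).map
        (fun k => if ∃ i, i ≤ n ∧ (T i).length = k then true else false)).length
        = maxLen T n + 1 := by simp
    have hmax : max (maxLen T n + 1) ((T (n + 1)).length + 1) = maxLen T (n + 1) + 1 := by
      rw [maxLen_succ]; omega
    rw [hlen, hmax]
    apply List.map_congr_left
    intro k hk
    rw [List.mem_range] at hk
    simp only [bit]
    have hget : ((List.range (maxLen T n + 1)).map
        (fun k => if ∃ i, i ≤ n ∧ (T i).length = k then true else false))[k]?
        = if k < maxLen T n + 1 then
            some (if ∃ i, i ≤ n ∧ (T i).length = k then true else false) else none := by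
      by_cases h : k < maxLen T n + 1
      · simp [List.getElem?_map, List.getElem?_range h, h]
      · rw [List.getElem?_eq_none (by rw [hlen]; omega), if_neg h]
    rw [hget]
    by_cases h : k < maxLen T n + 1
    · simp only [if_pos h, Option.getD_some]
      by_cases h1 : ∃ i, i ≤ n ∧ (T i).length = k
      · have : ∃ i, i ≤ n + 1 ∧ (T i).length = k := by
          obtain ⟨i, hi, hl⟩ := h1; exact ⟨i, by omega, hl⟩
        simp [h1, this]
      · by_cases h2 : k = (T (n + 1)).length
        · subst h2
          have : ∃ i, i ≤ n + 1 ∧ (T i).length = (T (n + 1)).length :=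
            ⟨n + 1, le_refl _, rfl⟩
          simp [h1, this]
        · have : ¬ ∃ i, i ≤ n + 1 ∧ (T i).length = k := by
            rintro ⟨i, hi, hl⟩
            rcases Nat.lt_or_ge i (n + 1) with hi' | hi'
            · exact h1 ⟨i, by omega, hl⟩
            · have : i = n + 1 := by omega
              exact h2 (by rw [← hl, this])
          simp [h1, h2, this]
    · simp only [if_neg h, Option.getD_none, Bool.false_or]
      have h1 : ¬ ∃ i, i ≤ n ∧ (T i).length = k := by
        rintro ⟨i, hi, hl⟩
        have := len_le_maxLen T hi
        omega
      by_cases h2 : k = (T (n + 1)).length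
      · subst h2
        have : ∃ i, i ≤ n + 1 ∧ (T i).length = (T (n + 1)).length :=
          ⟨n + 1, le_refl _, rfl⟩
        simp [this]
      · have : ¬ ∃ i, i ≤ n + 1 ∧ (T i).length = k := by
          rintro ⟨i, hi, hl⟩
          rcases Nat.lt_or_ge i (n + 1) with hi' | hi'
          · exact h1 ⟨i, by omega, hl⟩
          · have : i = n + 1 := by omega
            exact h2 (by rw [← hl, this])
        simp [h2, this]

lemma bit_hix_false (om : List Bool) (ℓ : ℕ) (h : hix om ℓ < max om.length (ℓ + 1)) :
    bit om ℓ (hix om ℓ) = false := by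
  have hlt : hix om ℓ < (nmem om ℓ).length := by rw [nmem_length]; exact h
  have hthis : (!(nmem om ℓ)[hix om ℓ]'hlt) = true :=
    List.findIdx_getElem (p := fun b => !b) (xs := nmem om ℓ) (w := hlt)
  rw [nmem_getElem om ℓ _ hlt] at hthis
  simpa using hthis

lemma hyp_formula {σ : Type} (T : ℕ → List σ) (n : ℕ) :
    (learner σ).hyp T n = List.replicate (sInf { h : ℕ | ∀ i ≤ n, (T i).length ≠ h }) () := by
  set om := (learner σ).mem T n with hom
  set ℓ := (T n).length with hℓ
  have hh : (learner σ).hyp T n = List.replicate (hix om ℓ) () := rfl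
  rw [hh]
  congr 1
  -- nmem om ℓ is the bitmap of seen lengths
  have hnm : nmem om ℓ = (List.range (maxLen T n + 1)).map
      (fun k => if ∃ i, i ≤ n ∧ (T i).length = k then true else false) := by
    rw [← mem_formula T n]; rfl
  have hmax : max om.length (ℓ + 1) = maxLen T n + 1 := by
    have := nmem_length om ℓ
    rw [hnm] at this
    simpa using this.symm
  have hbit : ∀ k < maxLen T n + 1,
      bit om ℓ k = (if ∃ i, i ≤ n ∧ (T i).length = k then true else false) := by
    intro k hk
    have h1 := nmem_get? om ℓ k (by rw [hmax]; exact hk)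
    rw [hnm, List.getElem?_map, List.getElem?_range hk] at h1
    simpa using h1.symm
  set F := hix om ℓ with hF
  have hFle : F ≤ maxLen T n + 1 := by rw [← hmax]; exact hix_le om ℓ
  -- every h < F has been seen
  have ha : ∀ h < F, ∃ i, i ≤ n ∧ (T i).length = h := by
    intro h hhF
    have hmaxh : h < max om.length (ℓ + 1) := by rw [hmax]; omega
    have := (lt_hix_iff om ℓ h hmaxh).1 hhF h (le_refl h)
    rw [hbit h (by omega)] at this
    by_contra hc
    simp [hc] at this
  -- F itself has not been seen
  have hb : F ∈ { h : ℕ | ∀ i ≤ n, (T i).length ≠ h } := by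
    intro i hi
    rcases Nat.lt_or_ge F (maxLen T n + 1) with hlt | hge
    · have := bit_hix_false om ℓ (by rw [hmax]; exact hlt)
      rw [hbit F hlt] at this
      intro hcon
      simp [show ∃ j, j ≤ n ∧ (T j).length = F from ⟨i, hi, hcon⟩] at this
    · have h1 : F = maxLen T n + 1 := by omega
      have := len_le_maxLen T hi
      omega
  have hne : { h : ℕ | ∀ i ≤ n, (T i).length ≠ h }.Nonempty := ⟨F, hb⟩
  have h1 := Nat.sInf_mem hne
  have h2 := Nat.sInf_le hb
  rcases Nat.lt_or_ge (sInf { h : ℕ | ∀ i ≤ n, (T i).length ≠ h }) F with hlt | hge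
  · obtain ⟨i, hi, hl⟩ := ha _ hlt
    exact absurd hl (h1 i hi)
  · omega

lemma exists_bound {P : ℕ → ℕ → Prop} (m : ℕ) (h : ∀ k < m, ∃ i, P i k) :
    ∃ N, ∀ k < m, ∃ i ≤ N, P i k := by
  induction m with
  | zero => exact ⟨0, fun k hk => absurd hk (Nat.not_lt_zero k)⟩
  | succ m ih =>
    obtain ⟨N, hN⟩ := ih (fun k hk => h k (by omega))
    obtain ⟨i, hi⟩ := h m (by omega)
    refine ⟨max N i, fun k hk => ?_⟩
    rcases Nat.lt_or_ge k m with h1 | h1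
    · obtain ⟨j, hj, hPj⟩ := hN k h1
      exact ⟨j, le_trans hj (le_max_left _ _), hPj⟩
    · have : k = m := by omega
      exact ⟨i, le_max_right _ _, this ▸ hi⟩

lemma learner_learns {σ : Type} :
    (learner σ).Learns (Set.univ : Set (List Unit))
      (fun e => { x : List σ | x.length ≠ e.length }) := by
  intro e₀ _ T hT
  have hT' : Set.range T = { x : List σ | x.length ≠ e₀.length } := hT
  set Cset := { h : ℕ | ∀ i, (T i).length ≠ h } with hC
  have hc0 : e₀.length ∈ Cset := by
    intro i
    have hmemT : T i ∈ Set.range T := ⟨i, rfl⟩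
    rw [hT'] at hmemT
    exact hmemT
  set hZ := sInf Cset with hinf
  have hmem : hZ ∈ Cset := Nat.sInf_mem ⟨_, hc0⟩
  have hle : hZ ≤ e₀.length := Nat.sInf_le hc0
  have hseen : ∀ h < hZ, ∃ i, (T i).length = h := by
    intro h hh
    have := Nat.notMem_of_lt_sInf hh
    simp only [hC, Set.mem_setOf_eq] at this
    push_neg at this
    exact this
  refine ⟨List.replicate hZ (), Set.mem_univ _, ?_, ?_⟩
  · ext x
    simp only [Set.mem_setOf_eq, List.length_replicate]
    have hiff : x.length = hZ ↔ x.length = e₀.length := by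
      constructor
      · intro hx
        have hxr : x ∉ Set.range T := by
          rintro ⟨i, rfl⟩
          exact hmem i hx
        rw [hT'] at hxr
        simpa using hxr
      · intro hx
        by_contra hne
        have hlt : hZ < x.length := by omega
        set x' := x.take hZ with hx'
        have hx'len : x'.length = hZ := by
          rw [hx', List.length_take]; omega
        have : x' ∈ Set.range T := by
          rw [hT']
          simp only [Set.mem_setOf_eq, hx'len]
          omega
        obtain ⟨i, hi⟩ := this
        exact hmem i (by rw [hi, hx'len])
    constructor
    · intro h1 h2; exact h1 (hiff.2 h2)
    · intro h1 h2; exact h1 (hiff.1 h2)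
  · obtain ⟨N, hN⟩ := exists_bound (P := fun i k => (T i).length = k) hZ hseen
    refine ⟨N, fun n hn => ?_⟩
    rw [hyp_formula]
    congr 1
    set sn := { h : ℕ | ∀ i ≤ n, (T i).length ≠ h } with hsn
    have hbn : hZ ∈ sn := fun i _ => hmem i
    have h2 := Nat.sInf_le hbn
    have h1 := Nat.sInf_mem (⟨hZ, hbn⟩ : sn.Nonempty)
    rcases Nat.lt_or_ge (sInf sn) hZ with hlt | hge
    · obtain ⟨i, hiN, hl⟩ := hN _ hlt
      exact absurd hl (h1 i (le_trans hiN hn))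
    · omega

lemma learner_memBounded {σ : Type} : (learner σ).MemBounded := by
  refine ⟨1, fun T n => ?_⟩
  rw [mem_formula]
  simp

/-- The alphabet of the convolution of (old memory, datum, new memory, conjecture). -/
abbrev Sym (σ : Type) := Option Bool × Option σ × Option Bool × Option Unit

/-- DFA states: (old memory ended, datum ended, all new-memory bits so far true). -/
abbrev St := Bool × Bool × Bool

def tstep {σ : Type} (s : St) (x : Sym σ) : Option St :=
  let cb : Bool := decide (x.1 = some true) || (x.2.1.isNone && !s.2.1)
  if (s.1 = true ∧ x.1.isSome = true) ∨ (s.2.1 = true ∧ x.2.1.isSome = true)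
      ∨ (x.1 = none ∧ s.2.1 = true) then none
  else if x.2.2.1 = some cb ∧ x.2.2.2.isSome = (s.2.2 && cb) then
    some (x.1.isNone, x.2.1.isNone, s.2.2 && cb)
  else none

def dfa (σ : Type) : DFA (Sym σ) (Option St) :=
  ⟨fun q x => q.bind (fun s => tstep s x), some (false, false, true),
   { q | ∃ s : St, q = some s ∧ s.2.1 = true }⟩

lemma decide_some_true (o : Option Bool) : decide (o = some true) = o.getD false := by
  cases o with
  | none => simp
  | some v => cases v <;> simp

/-- The cell of the convolution at position `k`. -/
def cell {σ : Type} (om : List Bool) (dat : List σ) (k : ℕ) : Sym σ :=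
  (om[k]?, dat[k]?, (nmem om dat.length)[k]?,
    (List.replicate (hix om dat.length) ())[k]?)

lemma eval_state {σ : Type} (om : List Bool) (dat : List σ) :
    ∀ m ≤ max om.length (dat.length + 1),
    (dfa σ).evalFrom (dfa σ).start ((List.range m).map (cell om dat))
      = some (decide (om.length < m), decide (dat.length < m),
              decide (∀ j < m, bit om dat.length j = true)) := by
  intro m
  induction m with
  | zero =>
    intro _
    simp [dfa, DFA.evalFrom]
  | succ m ih =>
    intro hm
    set ℓ := dat.length with hℓ
    have hmL : m < max om.length (ℓ + 1) := by omega
    rw [List.range_succ, List.map_append, List.map_singleton,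
      DFA.evalFrom_append_singleton, ih (by omega)]
    have hc : (nmem om ℓ)[m]? = some (bit om ℓ m) := nmem_get? om ℓ m hmL
    have hd : (List.replicate (hix om ℓ) ())[m]?
        = if m < hix om ℓ then some () else none := by
      simp [List.getElem?_replicate]
    show (some _).bind (fun s => tstep s (cell om dat m)) = _
    rw [Option.bind_some]
    unfold tstep cell
    simp only [← hℓ, hc, hd]
    -- compute cb
    have hcb : (decide (om[m]? = some true)
        || ((dat[m]?).isNone && !decide (ℓ < m))) = bit om ℓ m := by
      rw [decide_some_true, bit]
      congr 1
      by_cases h1 : ℓ ≤ m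
      · have hb : (dat[m]?).isNone = true := by
          simp [Option.isNone_iff_eq_none, List.getElem?_eq_none_iff, h1]; omega
        rw [hb]
        by_cases h2 : ℓ < m
        · simp [h2, show ¬ (m = ℓ) by omega]
        · simp [h2, show m = ℓ by omega]
      · have h2 : dat[m]? ≠ none := by
          rw [Ne, List.getElem?_eq_none_iff]; omega
        obtain ⟨v, hv⟩ := Option.ne_none_iff_exists'.1 h2
        have hb : (dat[m]?).isNone = false := by rw [hv]; rfl
        rw [hb]
        simp [show ¬ (m = ℓ) by omega, show ¬ (ℓ < m) by omega]
    -- the "dead" condition is false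
    have hbad : ¬ ((decide (om.length < m) = true ∧ (om[m]?).isSome = true)
        ∨ (decide (ℓ < m) = true ∧ (dat[m]?).isSome = true)
        ∨ (om[m]? = none ∧ decide (ℓ < m) = true)) := by
      push_neg
      refine ⟨?_, ?_, ?_⟩
      · intro h1
        have hlt : om.length < m := of_decide_eq_true h1
        have h2 : om[m]? = none := List.getElem?_eq_none_iff.2 (by omega)
        simp [h2]
      · intro h1
        have hlt : ℓ < m := of_decide_eq_true h1
        have h2 : dat[m]? = none := List.getElem?_eq_none_iff.2 (by omega)
        simp [h2]
      · intro h1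
        have hle : om.length ≤ m := List.getElem?_eq_none_iff.1 h1
        have h2 : ¬ (ℓ < m) := by omega
        simpa using h2
    rw [if_neg hbad, hcb]
    have hdIs : (if m < hix om ℓ then some () else none).isSome
        = (decide (∀ j < m, bit om ℓ j = true) && bit om ℓ m) := by
      have hiff : m < hix om ℓ ↔ ∀ j ≤ m, bit om ℓ j = true := lt_hix_iff om ℓ m hmL
      by_cases h1 : m < hix om ℓ
      · have h2 := hiff.1 h1
        have h3 : ∀ j < m, bit om ℓ j = true := fun j hj => h2 j (le_of_lt hj)
        simp [h1, decide_eq_true h3, h2 m (le_refl m)]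
      · rw [if_neg h1]
        have h2 : ¬ ∀ j ≤ m, bit om ℓ j = true := fun h => h1 (hiff.2 h)
        push_neg at h2
        obtain ⟨j, hj, hbj⟩ := h2
        rcases Nat.lt_or_ge j m with h3 | h3
        · have h4 : ¬ ∀ j < m, bit om ℓ j = true := by
            push_neg; exact ⟨j, h3, hbj⟩
          simp [decide_eq_false h4]
        · have hjm : j = m := by omega
          rw [hjm] at hbj
          simp [Bool.eq_false_iff.2 hbj]
    rw [if_pos ⟨rfl, hdIs⟩]
    congr 2
    · by_cases h1 : om.length < m + 1
      · have h2 : om[m]? = none := List.getElem?_eq_none_iff.2 (by omega)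
        simp [h2, h1]
      · have h2 : om[m]? ≠ none := by rw [Ne, List.getElem?_eq_none_iff]; omega
        obtain ⟨v, hv⟩ := Option.ne_none_iff_exists'.1 h2
        simp [hv, h1]
    · congr 1
      · by_cases h1 : ℓ < m + 1
        · have h2 : dat[m]? = none := List.getElem?_eq_none_iff.2 (by omega)
          simp [h2, h1]
        · have h2 : dat[m]? ≠ none := by rw [Ne, List.getElem?_eq_none_iff]; omega
          obtain ⟨v, hv⟩ := Option.ne_none_iff_exists'.1 h2
          simp [hv, h1]
      · by_cases h1 : ∀ j < m, bit om ℓ j = true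
        · by_cases h2 : bit om ℓ m = true
          · have h3 : ∀ j < m + 1, bit om ℓ j = true := by
              intro j hj
              rcases Nat.lt_or_ge j m with h3 | h3
              · exact h1 j h3
              · have : j = m := by omega
                rw [this]; exact h2
            simp [decide_eq_true h1, decide_eq_true h3, h2]
            exact fun j hj => h3 j (by omega)
          · have h3 : ¬ ∀ j < m + 1, bit om ℓ j = true := by
              push_neg
              exact ⟨m, by omega, h2⟩
            simp [decide_eq_true h1, decide_eq_false h3, Bool.eq_false_iff.2 h2]
            exact ⟨m, le_refl m, Bool.eq_false_iff.2 h2⟩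
        · have h3 : ¬ ∀ j < m + 1, bit om ℓ j = true := by
            push_neg at h1 ⊢
            obtain ⟨j, hj, hbj⟩ := h1
            exact ⟨j, by omega, hbj⟩
          simp [decide_eq_false h1, decide_eq_false h3]
          push_neg at h3
          obtain ⟨j, hj, hbj⟩ := h3
          exact ⟨j, by omega, by simpa using hbj⟩

lemma get?_append_toList_lt {α : Type} (l : List α) (o : Option α) {k : ℕ}
    (hk : k < l.length) : (l ++ o.toList)[k]? = l[k]? := by
  simp [List.getElem?_append_left hk]

lemma get?_append_toList_self {α : Type} (l : List α) (o : Option α) :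
    (l ++ o.toList)[l.length]? = o := by
  cases o <;> simp [List.getElem?_append_right]

lemma eval_snoc {σ : Type} (w : List (Sym σ)) (x : Sym σ) :
    (dfa σ).eval (w ++ [x]) = (dfa σ).step ((dfa σ).eval w) x :=
  DFA.evalFrom_append_singleton _ _ _ _

lemma invariant {σ : Type} (w : List (Sym σ)) :
    (dfa σ).eval w = none ∨ ∃ om : List Bool, ∃ dat : List σ,
      om.length ≤ w.length ∧ dat.length ≤ w.length ∧
      (∀ k < w.length, k < max om.length (dat.length + 1)) ∧
      w = (List.range w.length).map (fun k =>
        (om[k]?, dat[k]?, some (bit om dat.length k),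
          if ∀ j ≤ k, bit om dat.length j = true then (some () : Option Unit) else none)) ∧
      (dfa σ).eval w = some (decide (om.length < w.length), decide (dat.length < w.length),
        decide (∀ j < w.length, bit om dat.length j = true)) := by
  induction w using List.reverseRecOn with
  | nil =>
    right
    refine ⟨[], [], le_refl 0, le_refl 0, fun k hk => by simp at hk, by simp, ?_⟩
    simp [DFA.eval, DFA.evalFrom, dfa]
  | append_singleton w x ih =>
    rcases ih with hnone | ⟨om, dat, hom, hdat, hrange, hw, hev⟩
    · left
      rw [eval_snoc, hnone]
      rfl
    rcases x with ⟨a, b, c, d⟩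
    set n := w.length with hn
    set ℓ := dat.length with hℓ
    rw [eval_snoc, hev]
    show ((tstep _ _ : Option St) = none ∨ _)
    unfold tstep
    by_cases hbad : (decide (om.length < n) = true ∧ a.isSome = true)
        ∨ (decide (ℓ < n) = true ∧ b.isSome = true)
        ∨ (a = none ∧ decide (ℓ < n) = true)
    · left
      rw [if_pos hbad]
    rw [if_neg hbad]
    have hbad0 := hbad
    push_neg at hbad
    obtain ⟨hbad1, hbad2, hbad3⟩ := hbad
    set cb : Bool := decide (a = some true) || (b.isNone && !decide (ℓ < n)) with hcbdef
    by_cases hck : c = some cb ∧ d.isSome = (decide (∀ j < n, bit om ℓ j = true) && cb)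
    · right
      -- extend om and dat
      set om' := om ++ a.toList with hom'
      set dat' := dat ++ b.toList with hdat'
      set ℓ' := dat'.length with hℓ'
      -- basic length facts
      have homlen : om.length = n ∨ a = none := by
        cases a with
        | none => exact Or.inr rfl
        | some v =>
          left
          have := hbad1
          simp at this
          omega
      have hdatlen : ℓ = n ∨ b = none := by
        cases b with
        | none => exact Or.inr rfl
        | some v =>
          left
          have := hbad2
          simp at this
          omega
      have hom'len : om'.length ≤ n + 1 := by
        rw [hom', List.length_append]
        have ht : a.toList.length ≤ 1 := by cases a <;> simp
        omega
      have hdat'len : ℓ' ≤ n + 1 := by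
        rw [hℓ', hdat', List.length_append]
        have ht : b.toList.length ≤ 1 := by cases b <;> simp
        omega
      -- get? facts
      have hA : ∀ k < n, om'[k]? = om[k]? := by
        intro k hk
        cases a with
        | none => simp [hom', Option.toList]
        | some v =>
          rcases homlen with h | h
          · exact get?_append_toList_lt om _ (by omega)
          · exact absurd h (by simp)
      have hAn : om'[n]? = a := by
        cases a with
        | none =>
          simp only [hom', Option.toList, List.append_nil]
          exact List.getElem?_eq_none_iff.2 (by omega)
        | some v =>
          rcases homlen with h | h
          · rw [hom', ← h]; exact get?_append_toList_self om _
          · exact absurd h (by simp)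
      have hB : ∀ k < n, dat'[k]? = dat[k]? := by
        intro k hk
        cases b with
        | none => simp [hdat', Option.toList]
        | some v =>
          rcases hdatlen with h | h
          · exact get?_append_toList_lt dat _ (by omega)
          · exact absurd h (by simp)
      have hBn : dat'[n]? = b := by
        cases b with
        | none =>
          simp only [hdat', Option.toList, List.append_nil]
          exact List.getElem?_eq_none_iff.2 (by omega)
        | some v =>
          rcases hdatlen with h | h
          · rw [hdat', ← h]; exact get?_append_toList_self dat _
          · exact absurd h (by simp)
      -- bits agree below n
      have hbitlt : ∀ k < n, bit om' ℓ' k = bit om ℓ k := by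
        intro k hk
        rw [bit, bit, hA k hk]
        congr 1
        cases b with
        | none =>
          have : ℓ' = ℓ := by rw [hℓ', hdat']; simp [Option.toList, hℓ]
          rw [this]
        | some v =>
          rcases hdatlen with h | h
          · have h1 : ℓ' = n + 1 := by rw [hℓ', hdat', List.length_append, ← hℓ, h]; simp
            simp [h1, h, show ¬ (k = n + 1) by omega, show ¬ (k = n) by omega]
          · exact absurd h (by simp)
      -- the new bit equals cb
      have hbitn : bit om' ℓ' n = cb := by
        rw [bit, hAn, hcbdef, decide_some_true]
        congr 1
        cases b with
        | none =>
          have h1 : ℓ' = ℓ := by rw [hℓ', hdat']; simp [Option.toList, hℓ]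
          rw [h1]
          have h2 : ℓ ≤ n := hdat
          by_cases h3 : ℓ < n
          · simp [h3, show ¬ (n = ℓ) by omega]
          · simp [h3, show n = ℓ by omega]
        | some v =>
          rcases hdatlen with h | h
          · have h1 : ℓ' = n + 1 := by rw [hℓ', hdat', List.length_append, ← hℓ, h]; simp
            simp [h1]
          · exact absurd h (by simp)
      -- the combined condition for the conjecture column
      have hcomb : (decide (∀ j < n, bit om ℓ j = true) && cb)
          = decide (∀ j ≤ n, bit om' ℓ' j = true) := by
        by_cases hq : ∀ j ≤ n, bit om' ℓ' j = true
        · have q1 : ∀ j < n, bit om ℓ j = true := fun j hj => by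
            rw [← hbitlt j hj]; exact hq j (le_of_lt hj)
          have q2 : cb = true := by rw [← hbitn]; exact hq n (le_refl n)
          simp [decide_eq_true q1, q2, decide_eq_true hq]
        · rw [decide_eq_false hq]
          push_neg at hq
          obtain ⟨j, hj, hbj⟩ := hq
          rcases Nat.lt_or_ge j n with h1 | h1
          · have q1 : ¬ ∀ j < n, bit om ℓ j = true := by
              push_neg
              exact ⟨j, h1, by rw [← hbitlt j h1]; exact hbj⟩
            simp [decide_eq_false q1]
          · have hjn : j = n := by omega
            rw [hjn] at hbj
            have q2 : cb = false := by rw [← hbitn]; exact Bool.eq_false_iff.2 hbj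
            simp [q2]
      have hstep : (dfa σ).step (some (decide (om.length < n), decide (ℓ < n),
          decide (∀ j < n, bit om ℓ j = true))) ((a, b, c, d) : Sym σ)
          = some (a.isNone, b.isNone, decide (∀ j < n, bit om ℓ j = true) && cb) := by
        show (tstep _ _ : Option St) = _
        unfold tstep
        rw [if_neg hbad0, if_pos hck]
      rw [hstep]
      refine ⟨om', dat', ?_, ?_, ?_, ?_, ?_⟩
      · simpa using hom'len
      · simpa using hdat'len
      · intro k hk
        simp only [List.length_append, List.length_cons, List.length_nil] at hk
        have hl1 : om.length ≤ om'.length := by rw [hom', List.length_append]; omega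
        have hl2 : ℓ ≤ ℓ' := by rw [hℓ', hdat', List.length_append]; omega
        rcases Nat.lt_or_ge k n with h1 | h1
        · have := hrange k h1
          omega
        · have hkn : k = n := by omega
          subst hkn
          cases a with
          | some v =>
            have h2 : om'.length = n + 1 := by
              rcases homlen with h | h
              · rw [hom', List.length_append, h]; simp
              · exact absurd h (by simp)
            omega
          | none =>
            have h2 : ¬ decide (ℓ < n) = true := hbad3 rfl
            have h3 : ¬ (ℓ < n) := by simpa using h2
            omega
      · have hlen' : (w ++ [((a, b, c, d) : Sym σ)]).length = n + 1 := by simp [hn]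
        rw [hlen', List.range_succ, List.map_append, hw]
        congr 1
        · apply List.map_congr_left
          intro k hk
          rw [List.mem_range] at hk
          have e2 : (∀ j ≤ k, bit om' ℓ' j = true) ↔ (∀ j ≤ k, bit om ℓ j = true) := by
            constructor
            · intro h j hj
              rw [← hbitlt j (by omega)]; exact h j hj
            · intro h j hj
              rw [hbitlt j (by omega)]; exact h j hj
          have e3 : (if ∀ j ≤ k, bit om' ℓ' j = true then (some () : Option Unit) else none)
              = (if ∀ j ≤ k, bit om ℓ j = true then some () else none) :=
            if_congr e2 rfl rfl
          rw [hA k hk, hB k hk, hbitlt k hk, e3]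
        · have hc : c = some (bit om' ℓ' n) := by rw [hck.1, hbitn]
          have hd : d = (if ∀ j ≤ n, bit om' ℓ' j = true then some () else none) := by
            have h1 := hck.2
            rw [hcomb] at h1
            by_cases hq : ∀ j ≤ n, bit om' ℓ' j = true
            · rw [if_pos hq]
              rw [decide_eq_true hq] at h1
              cases d with
              | none => simp at h1
              | some u => rfl
            · rw [if_neg hq]
              rw [decide_eq_false hq] at h1
              cases d with
              | none => rfl
              | some u => simp at h1
          simp only [List.map_cons, List.map_nil]
          rw [hAn, hBn, ← hc, ← hd]
      · simp only [List.length_append, List.length_cons, List.length_nil]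
        congr 2
        · cases a with
          | some v =>
            have h2 : om'.length = n + 1 := by
              rcases homlen with h | h
              · rw [hom', List.length_append, h]; simp
              · exact absurd h (by simp)
            simp [h2] <;> omega
          | none =>
            have h2 : om'.length ≤ n := by
              rw [hom']; simpa using hom
            simp [show om'.length < n + 1 by omega] <;> omega
        · congr 1
          · cases b with
            | some v =>
              have h2 : ℓ' = n + 1 := by
                rcases hdatlen with h | h
                · rw [hℓ', hdat', List.length_append, ← hℓ, h]; simp
                · exact absurd h (by simp)
              simp [h2]
              omega
            | none =>
              have h2 : ℓ' ≤ n := by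
                rw [hℓ', hdat']; simpa using hdat
              simp [show ℓ' < n + 1 by omega] <;> omega
          · rw [hcomb]
            apply decide_eq_decide.2
            constructor
            · intro h j hj
              exact h j (by omega)
            · intro h j hj
              exact h j (by omega)
    · left
      rw [if_neg hck]

lemma conv4_eq {σ : Type} (om : List Bool) (dat : List σ) :
    conv4 om dat (nmem om dat.length) (List.replicate (hix om dat.length) ())
      = (List.range (max om.length (dat.length + 1))).map (cell om dat) := by
  unfold conv4 cell
  have h1 : max (max om.length dat.length)
      (max (nmem om dat.length).length (List.replicate (hix om dat.length) ()).length)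
      = max om.length (dat.length + 1) := by
    rw [nmem_length, List.length_replicate]
    have := hix_le om dat.length
    omega
  rw [h1]

lemma learner_automatic {σ : Type} [Fintype σ] : (learner σ).Automatic := by
  refine ⟨Option St, inferInstance, dfa σ, fun w => ?_⟩
  rw [DFA.mem_accepts]
  constructor
  · -- accepted → in the graph
    intro hacc
    rcases invariant w with hnone | ⟨om, dat, hom, hdat, hrange, hw, hev⟩
    · rw [show (dfa σ).eval w = none from hnone] at hacc
      obtain ⟨s, hs, _⟩ := hacc
      exact absurd hs (by simp)
    rw [show (dfa σ).eval w = _ from hev] at hacc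
    obtain ⟨s, hs, hs2⟩ := hacc
    have hbE : decide (dat.length < w.length) = true := by
      have := Option.some_injective _ hs
      rw [← this] at hs2
      exact hs2
    have hℓw : dat.length < w.length := of_decide_eq_true hbE
    have hmaxw : max om.length (dat.length + 1) = w.length := by
      have h1 : max om.length (dat.length + 1) ≤ w.length := by omega
      have h2 : w.length ≤ max om.length (dat.length + 1) := by
        have := hrange (w.length - 1) (by omega)
        omega
      omega
    refine ⟨om, dat, ?_⟩
    show w = conv4 om dat (nmem om dat.length) (List.replicate (hix om dat.length) ())
    rw [conv4_eq, hmaxw]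
    conv_lhs => rw [hw]
    apply List.map_congr_left
    intro k hk
    rw [List.mem_range] at hk
    have hkmax : k < max om.length (dat.length + 1) := by omega
    unfold cell
    rw [nmem_get? om dat.length k hkmax]
    have hrep : (List.replicate (hix om dat.length) ())[k]?
        = if k < hix om dat.length then some () else none := by
      simp [List.getElem?_replicate]
    rw [hrep]
    have hiff := lt_hix_iff om dat.length k hkmax
    by_cases hq : ∀ j ≤ k, bit om dat.length j = true
    · rw [if_pos hq, if_pos (hiff.2 hq)]
    · rw [if_neg hq, if_neg (fun h => hq (hiff.1 h))]
  · -- in the graph → accepted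
    rintro ⟨om, dat, hw⟩
    have hw' : w = (List.range (max om.length (dat.length + 1))).map (cell om dat) := by
      rw [hw]
      exact conv4_eq om dat
    rw [hw']
    have := eval_state om dat (max om.length (dat.length + 1)) (le_refl _)
    show (dfa σ).evalFrom (dfa σ).start _ ∈ _
    rw [this]
    exact ⟨_, rfl, by simp⟩

end Stmt9

/-- the automatic family of all strings of length different from the index
(`I = {0}*`, `L_e = {x : |x| ≠ |e|}`) is learnable by an automatic learner whose memory
is bounded by the length of the longest datum seen so far plus a constant; the learner
maintains as memory a binary string whose `k`-th bit records whether an example of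
length `k` has been seen, and conjectures `0^h` for the least `h` such that no example
of length `h` has been seen. -/
theorem stmt9 {σ : Type} [Fintype σ] :
    ∃ M : PLearner σ Bool Unit,
      M.Automatic ∧ M.MemBounded ∧
      M.Learns (Set.univ : Set (List Unit))
        (fun e => { x : List σ | x.length ≠ e.length }) ∧
      ∀ (T : ℕ → List σ) (n : ℕ),
        M.mem T (n + 1) = (List.range (maxLen T n + 1)).map
          (fun k => if ∃ i, i ≤ n ∧ (T i).length = k then true else false) ∧
        M.hyp T n = List.replicate (sInf { h : ℕ | ∀ i ≤ n, (T i).length ≠ h }) () :=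
  ⟨Stmt9.learner σ, Stmt9.learner_automatic, Stmt9.learner_memBounded, Stmt9.learner_learns,
    fun T n => ⟨Stmt9.mem_formula T n, Stmt9.hyp_formula T n⟩⟩
end

section
/- Let Σ = {0,1,2} and let ℒ be the automatic family consisting of L_ε = {0,1}*, L_{x0} = ({0,1}* ∪ {x2}) − {x} and L_{x1} = {0,1}* ∪ {x2} for each x ∈ {0,1}*. Then no automatic learner learns ℒ. -/
open Classical

/-- The set `{0,1}*` of binary strings inside `{0,1,2}*`. -/
def BSet : Set (List (Fin 3)) := { w | ∀ a ∈ w, a ≠ 2 }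

/-- The index set `{ε} ∪ {x0 : x ∈ {0,1}*} ∪ {x1 : x ∈ {0,1}*}`. -/
def I10 : Set (List (Fin 3)) :=
  { e | e = [] ∨ ∃ x : List (Fin 3), (∀ a ∈ x, a ≠ 2) ∧
    (e = x ++ [(0 : Fin 3)] ∨ e = x ++ [(1 : Fin 3)]) }

/-- The family with `L_ε = {0,1}*`, `L_{x0} = ({0,1}* ∪ {x2}) − {x}` and
`L_{x1} = {0,1}* ∪ {x2}`. -/
def Fam10 (e : List (Fin 3)) : Set (List (Fin 3)) :=
  if e = [] then BSet
  else if e.getLast? = some (0 : Fin 3) then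
    (BSet ∪ {e.dropLast ++ [(2 : Fin 3)]}) \ {e.dropLast}
  else if e.getLast? = some (1 : Fin 3) then BSet ∪ {e.dropLast ++ [(2 : Fin 3)]}
  else ∅

namespace Stmt10Aux

lemma conv4_get? {α β γ δ : Type} (a : List α) (b : List β) (c : List γ) (d : List δ) (p : ℕ) :
    (conv4 a b c d)[p]? =
      if p < max (max a.length b.length) (max c.length d.length) then
        some (a[p]?, b[p]?, (c)[p]?, d[p]?) else none := by
  unfold conv4
  by_cases h : p < max (max a.length b.length) (max c.length d.length)
  · rw [if_pos h, List.getElem?_map, List.getElem?_range h]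
    rfl
  · rw [if_neg h, List.getElem?_eq_none_iff.2]
    simpa using Nat.not_lt.1 h

lemma conv4_fst {α β γ δ : Type} (a : List α) (b : List β) (c : List γ) (d : List δ) (p : ℕ) :
    ((conv4 a b c d)[p]?).bind (fun t => t.1) = a[p]? := by
  rw [conv4_get?]
  by_cases h : p < max (max a.length b.length) (max c.length d.length)
  · rw [if_pos h]; rfl
  · have ha : a.length ≤ p :=
      le_trans (le_trans (le_max_left _ _) (le_max_left _ _)) (Nat.not_lt.1 h)
    rw [if_neg h, List.getElem?_eq_none_iff.2 ha]; rfl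

lemma conv4_snd {α β γ δ : Type} (a : List α) (b : List β) (c : List γ) (d : List δ) (p : ℕ) :
    ((conv4 a b c d)[p]?).bind (fun t => t.2.1) = b[p]? := by
  rw [conv4_get?]
  by_cases h : p < max (max a.length b.length) (max c.length d.length)
  · rw [if_pos h]; rfl
  · have hb : b.length ≤ p :=
      le_trans (le_trans (le_max_right _ _) (le_max_left _ _)) (Nat.not_lt.1 h)
    rw [if_neg h, List.getElem?_eq_none_iff.2 hb]; rfl

lemma cut_accept {α Q : Type} [Fintype Q] (dfa : DFA α Q) {w : List α} (hw : w ∈ dfa.accepts)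
    (B : ℕ) (hlen : B + Fintype.card Q < w.length) :
    ∃ i j, B ≤ i ∧ i < j ∧ j ≤ B + Fintype.card Q ∧ (w.take i ++ w.drop j) ∈ dfa.accepts := by
  set q := Fintype.card Q with hq
  have key : ∀ t₁ t₂ : Fin (q+1), t₁ < t₂ →
      dfa.evalFrom dfa.start (w.take (B + t₁.1)) = dfa.evalFrom dfa.start (w.take (B + t₂.1)) →
      ∃ i j, B ≤ i ∧ i < j ∧ j ≤ B + q ∧ (w.take i ++ w.drop j) ∈ dfa.accepts := by
    intro t₁ t₂ hlt heq
    refine ⟨B + t₁.1, B + t₂.1, Nat.le_add_right _ _, by omega, by have := t₂.2; omega, ?_⟩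
    rw [DFA.mem_accepts] at hw ⊢
    have h1 : dfa.eval (w.take (B + t₁.1) ++ w.drop (B + t₂.1)) =
        dfa.evalFrom (dfa.evalFrom dfa.start (w.take (B + t₁.1))) (w.drop (B + t₂.1)) :=
      DFA.evalFrom_of_append _ _ _ _
    rw [h1, heq, ← DFA.evalFrom_of_append, List.take_append_drop]
    exact hw
  have hc : Fintype.card Q < Fintype.card (Fin (q+1)) := by simp [hq]
  obtain ⟨t₁, t₂, hne, heq⟩ := Fintype.exists_ne_map_eq_of_card_lt
    (fun t : Fin (q+1) => dfa.evalFrom dfa.start (w.take (B + t.1))) hc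
  rcases hne.lt_or_gt with hlt | hlt
  · exact key t₁ t₂ hlt heq
  · exact key t₂ t₁ hlt heq.symm

lemma lstep_fst_length_le {σ' μ ι : Type} [Fintype σ'] [Fintype μ] [Fintype ι]
    (M : PLearner σ' μ ι) (h : M.Automatic) :
    ∃ q : ℕ, ∀ om dat, ((M.lstep om dat).1).length ≤ max om.length dat.length + q := by
  obtain ⟨Q, hQ, dfa, hdfa⟩ := h
  refine ⟨Fintype.card Q, fun om dat => ?_⟩
  by_contra hbig
  push_neg at hbig
  set nm := (M.lstep om dat).1 with hnm
  set nc := (M.lstep om dat).2 with hnc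
  set w := conv4 om dat nm nc with hwdef
  have hwmem : w ∈ dfa.accepts := (hdfa w).2 ⟨om, dat, rfl⟩
  have hwlen : w.length = max (max om.length dat.length) (max nm.length nc.length) := by
    simp [hwdef, conv4]
  set B := max om.length dat.length with hB
  have homB : om.length ≤ B := le_max_left _ _
  have hdatB : dat.length ≤ B := le_max_right _ _
  have hlt : B + Fintype.card Q < w.length := by
    rw [hwlen]
    have h1 := le_max_left nm.length nc.length
    have h2 := le_max_right (max om.length dat.length) (max nm.length nc.length)
    omega
  obtain ⟨i, j, hBi, hij, hjB, hacc⟩ := cut_accept dfa hwmem B hlt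
  obtain ⟨om', dat', hw'⟩ := (hdfa _).1 hacc
  have hj : j ≤ w.length := by omega
  have hi : i ≤ w.length := by omega
  have hcut : ∀ p, (w.take i ++ w.drop j)[p]? =
      if p < i then w[p]? else w[j + (p - i)]? := by
    intro p
    have hti : (w.take i).length = i := by
      rw [List.length_take]; omega
    by_cases hp : p < i
    · rw [if_pos hp, List.getElem?_append_left (by omega)]
      rw [List.getElem?_take, if_pos hp]
    · rw [if_neg hp, List.getElem?_append_right (by omega), hti, List.getElem?_drop]
  have hom : om' = om := by
    apply List.ext_getElem?
    intro p
    have h1 : om'[p]? = ((w.take i ++ w.drop j)[p]?).bind (fun t => t.1) := by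
      rw [hw']; exact (conv4_fst _ _ _ _ _).symm
    rw [h1, hcut p]
    by_cases hp : p < i
    · rw [if_pos hp, conv4_fst]
    · rw [if_neg hp, conv4_fst]
      rw [List.getElem?_eq_none_iff.2 (by omega), List.getElem?_eq_none_iff.2 (by omega)]
  have hdat : dat' = dat := by
    apply List.ext_getElem?
    intro p
    have h1 : dat'[p]? = ((w.take i ++ w.drop j)[p]?).bind (fun t => t.2.1) := by
      rw [hw']; exact (conv4_snd _ _ _ _ _).symm
    rw [h1, hcut p]
    by_cases hp : p < i
    · rw [if_pos hp, conv4_snd]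
    · rw [if_neg hp, conv4_snd]
      rw [List.getElem?_eq_none_iff.2 (by omega), List.getElem?_eq_none_iff.2 (by omega)]
  have hww : w.take i ++ w.drop j = w := by
    rw [hw', hom, hdat, ← hnm, ← hnc, ← hwdef]
  have := congrArg List.length hww
  rw [List.length_append, List.length_take, List.length_drop] at this
  omega

end Stmt10Aux
namespace Stmt10Aux

lemma mem_congr {σ' μ ι : Type} (M : PLearner σ' μ ι) (T T' : ℕ → List σ') :
    ∀ t, (∀ i < t, T i = T' i) → M.mem T t = M.mem T' t
  | 0, _ => rfl
  | t+1, h => by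
    show (M.lstep (M.mem T t) (T t)).1 = (M.lstep (M.mem T' t) (T' t)).1
    rw [mem_congr M T T' t (fun i hi => h i (by omega)), h t (by omega)]

def emb2 : Fin 2 → Fin 3 := fun a => ⟨a.1, by omega⟩

lemma emb2_ne_two (a : Fin 2) : emb2 a ≠ 2 := by
  have h2 := a.2
  intro h
  have := congrArg Fin.val h
  simp [emb2] at this
  omega

lemma emb2_inj : Function.Injective emb2 := by
  intro a b h
  exact Fin.ext (by simpa [emb2] using congrArg Fin.val h)

def bstr (i d : ℕ) (v : Fin d → Fin 2) : List (Fin 3) :=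
  List.replicate i 0 ++ (1 : Fin 3) :: List.ofFn (fun j => emb2 (v j))

lemma bstr_length (i d : ℕ) (v : Fin d → Fin 2) : (bstr i d v).length = i + 1 + d := by
  simp [bstr]; omega

lemma bstr_binary (i d : ℕ) (v : Fin d → Fin 2) : ∀ a ∈ bstr i d v, a ≠ (2 : Fin 3) := by
  intro a ha
  rcases List.mem_append.1 ha with h | h
  · rw [List.eq_of_mem_replicate h]; decide
  · rcases List.mem_cons.1 h with h | h
    · rw [h]; decide
    · obtain ⟨j, hj⟩ := List.mem_ofFn.1 h
      rw [← hj]; exact emb2_ne_two _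

lemma bstr_inj {i i' d : ℕ} {v v' : Fin d → Fin 2} (h : bstr i d v = bstr i' d v') :
    i = i' ∧ v = v' := by
  have hl := congrArg List.length h
  rw [bstr_length, bstr_length] at hl
  have hii : i = i' := by omega
  subst hii
  refine ⟨rfl, ?_⟩
  have h2 := List.append_cancel_left h
  injection h2 with _ h3
  have h4 := List.ofFn_inj.1 h3
  funext j
  exact emb2_inj (congrFun h4 j)

noncomputable def denumL : Denumerable (List (Fin 2)) :=
  Denumerable.ofEncodableOfInfinite _

noncomputable def enumB : ℕ → List (Fin 3) :=
  fun t => (@Denumerable.ofNat (List (Fin 2)) denumL t).map emb2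

lemma enumB_binary (t : ℕ) : ∀ a ∈ enumB t, a ≠ (2 : Fin 3) := by
  intro a ha
  obtain ⟨b, _, hb⟩ := List.mem_map.1 ha
  rw [← hb]; exact emb2_ne_two _

lemma enumB_surj (w : List (Fin 3)) (hw : ∀ a ∈ w, a ≠ (2 : Fin 3)) : ∃ t, enumB t = w := by
  classical
  refine ⟨@Encodable.encode _ denumL.toEncodable (w.map fun a => if a = 0 then (0 : Fin 2) else 1), ?_⟩
  unfold enumB
  rw [@Denumerable.ofNat_encode _ denumL, List.map_map]
  have hall : ∀ a : Fin 3, a ≠ 2 → (emb2 ∘ fun a => if a = 0 then (0 : Fin 2) else 1) a = id a := by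
    decide
  have hcongr : ∀ a ∈ w, (emb2 ∘ fun a => if a = 0 then (0 : Fin 2) else 1) a = id a :=
    fun a ha => hall a (hw a ha)
  rw [List.map_congr_left hcongr, List.map_id]

lemma Fam10_nil : Fam10 [] = BSet := by simp [Fam10]

lemma Fam10_concat0 (x : List (Fin 3)) :
    Fam10 (x ++ [(0 : Fin 3)]) = (BSet ∪ {x ++ [(2 : Fin 3)]}) \ {x} := by
  simp [Fam10, List.getLast?_concat, List.dropLast_concat]

lemma Fam10_concat1 (x : List (Fin 3)) :
    Fam10 (x ++ [(1 : Fin 3)]) = BSet ∪ {x ++ [(2 : Fin 3)]} := by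
  simp [Fam10, List.getLast?_concat, List.dropLast_concat,
    show ((1 : Fin 3) = 0) = False by simp]

lemma concat2_not_BSet (x : List (Fin 3)) : x ++ [(2 : Fin 3)] ∉ BSet := by
  intro h
  exact h 2 (by simp) rfl

lemma concat2_inj {x y : List (Fin 3)} (h : x ++ [(2 : Fin 3)] = y ++ [(2 : Fin 3)]) : x = y := by
  have := congrArg List.dropLast h
  simpa [List.dropLast_concat] using this

lemma uniq1 (x : List (Fin 3)) (e : List (Fin 3)) (he : e ∈ I10)
    (h : Fam10 e = BSet ∪ {x ++ [(2 : Fin 3)]}) : e = x ++ [(1 : Fin 3)] := by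
  rcases he with rfl | ⟨y, hy, rfl | rfl⟩
  · exfalso
    rw [Fam10_nil] at h
    have hx2 : x ++ [(2 : Fin 3)] ∈ BSet := by
      rw [h]; exact Set.mem_union_right _ rfl
    exact concat2_not_BSet x hx2
  · exfalso
    rw [Fam10_concat0] at h
    have : y ∈ (BSet ∪ {y ++ [(2 : Fin 3)]}) \ {y} := by rw [h]; exact Set.mem_union_left _ hy
    exact this.2 rfl
  · rw [Fam10_concat1] at h
    have hy2 : y ++ [(2 : Fin 3)] ∈ BSet ∪ {x ++ [(2 : Fin 3)]} := by
      rw [← h]; exact Set.mem_union_right _ rfl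
    rcases hy2 with h2 | h2
    · exact absurd h2 (concat2_not_BSet y)
    · rw [concat2_inj (Set.mem_singleton_iff.1 h2)]

lemma uniq0 (x : List (Fin 3)) (hx : x ∈ BSet) (e : List (Fin 3)) (he : e ∈ I10)
    (h : Fam10 e = (BSet ∪ {x ++ [(2 : Fin 3)]}) \ {x}) : e = x ++ [(0 : Fin 3)] := by
  rcases he with rfl | ⟨y, hy, rfl | rfl⟩
  · exfalso
    rw [Fam10_nil] at h
    have : x ∈ (BSet ∪ {x ++ [(2 : Fin 3)]}) \ {x} := by rw [← h]; exact hx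
    exact this.2 rfl
  · rw [Fam10_concat0] at h
    have hy2 : y ++ [(2 : Fin 3)] ∈ (BSet ∪ {x ++ [(2 : Fin 3)]}) \ {x} := by
      rw [← h]
      refine ⟨Set.mem_union_right _ rfl, ?_⟩
      intro hc
      have := congrArg List.length (Set.mem_singleton_iff.1 hc)
      simp at this
    rcases hy2.1 with h2 | h2
    · exact absurd h2 (concat2_not_BSet y)
    · rw [concat2_inj (Set.mem_singleton_iff.1 h2)]
  · exfalso
    rw [Fam10_concat1] at h
    have : x ∈ (BSet ∪ {x ++ [(2 : Fin 3)]}) \ {x} := by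
      rw [← h]; exact Set.mem_union_left _ hx
    exact this.2 rfl

end Stmt10Aux
namespace Stmt10Aux

lemma arith (K q m0 s d : ℕ) (hK : 1 ≤ K) (hs : s = K*(q+1)+m0+2) (hd : d = K*(q+2)*s+m0+2) :
    K*(s+d+q*s+1) < d*s := by
  have hs1 : 1 ≤ s := by
    have := Nat.zero_le (K*(q+1)); omega
  have h2K : 2 ≤ K*(q+2) := by
    have h0 : 1*2 ≤ K*(q+2) := Nat.mul_le_mul hK (by omega)
    linarith
  have h2s : 2*s ≤ K*(q+2)*s := Nat.mul_le_mul h2K le_rfl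
  have hsd : s ≤ d := by
    have h1 : s ≤ 2*s := by linarith
    linarith
  have h2d : 2*(K*s) + 4 ≤ 2*d := by
    have h1 : K*s ≤ K*(q+2)*s := by
      have h0 : K*1 ≤ K*(q+2) := Nat.mul_le_mul le_rfl (by omega)
      exact Nat.mul_le_mul (by linarith) le_rfl
    linarith
  have hqs : K*q*s ≤ K*q*d := Nat.mul_le_mul le_rfl hsd
  have hKs : K ≤ K*s := by
    have := Nat.mul_le_mul (le_refl K) hs1
    linarith
  have hexp : d*s = K*q*d + K*d + m0*d + 2*d := by
    rw [hs]; ring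
  have hgoal : K*(s+d+q*s+1) = K*s + K*d + K*q*s + K := by ring
  rw [hexp, hgoal]
  have := Nat.zero_le (m0*d)
  linarith

end Stmt10Aux
/-- no automatic learner learns the family ℒ consisting of
`L_ε = {0,1}*`, `L_{x0} = ({0,1}* ∪ {x2}) − {x}` and `L_{x1} = {0,1}* ∪ {x2}`. -/
theorem stmt10 :
    ¬ ∃ (μ : Type) (_ : Fintype μ) (M : PLearner (Fin 3) μ (Fin 3)),
        M.Automatic ∧ M.Learns I10 Fam10 := by
  rintro ⟨μ, instμ, M, hAuto, hLearn⟩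
  obtain ⟨q, hq⟩ := Stmt10Aux.lstep_fst_length_le M hAuto
  set k := Fintype.card μ with hk
  set m0 := M.minit.length with hm0
  set s := (k+1)*(q+1) + m0 + 2 with hs
  set d := (k+1)*(q+2)*s + m0 + 2 with hd
  have hs2 : 2 ≤ s := by have := Nat.zero_le ((k+1)*(q+1)); omega
  have hm0d : m0 ≤ d := by have := Nat.zero_le ((k+1)*(q+2)*s); omega
  set Lb := s + d + q*s with hLb
  -- the data words
  set u : (Fin s → Fin d → Fin 2) → ℕ → List (Fin 3) :=
    fun g t => if h : t < s then Stmt10Aux.bstr t d (g ⟨t, h⟩) else [] with hu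
  set Φ : (Fin s → Fin d → Fin 2) → List μ := fun g => M.mem (u g) s with hΦ
  -- memory stays short
  have hmemlen : ∀ g t, t ≤ s → (M.mem (u g) t).length ≤ (s+d) + q*t := by
    intro g t
    induction t with
    | zero =>
      intro _
      show M.minit.length ≤ (s+d) + q*0
      omega
    | succ t ih =>
      intro ht
      have h1 : M.mem (u g) (t+1) = (M.lstep (M.mem (u g) t) (u g t)).1 := rfl
      have h2 := hq (M.mem (u g) t) (u g t)
      have h3 : (u g t).length ≤ s + d := by
        simp only [hu]
        split
        · rw [Stmt10Aux.bstr_length]; omega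
        · simp
      have h4 := ih (by omega)
      have h5 : max (M.mem (u g) t).length (u g t).length ≤ (s+d) + q*t :=
        max_le h4 (by omega)
      rw [h1]
      calc ((M.lstep (M.mem (u g) t) (u g t)).1).length
          ≤ max (M.mem (u g) t).length (u g t).length + q := h2
        _ ≤ (s+d) + q*t + q := by omega
        _ = (s+d) + q*(t+1) := by ring
  have hΦlen : ∀ g, (Φ g).length ≤ Lb := fun g => by
    show (M.mem (u g) s).length ≤ Lb
    have := hmemlen g s le_rfl
    omega
  -- cardinality collision
  have hcard : Fintype.card (Fin (Lb+1) → Option μ) < Fintype.card (Fin s → Fin d → Fin 2) := by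
    rw [Fintype.card_fun, Fintype.card_fun, Fintype.card_fun]
    rw [Fintype.card_option, Fintype.card_fin, Fintype.card_fin, Fintype.card_fin,
      Fintype.card_fin]
    have harith : (k+1)*(Lb+1) < d*s := by
      have := Stmt10Aux.arith (k+1) q m0 s d (by omega) hs hd
      have hEq : (k+1)*(Lb+1) = (k+1)*(s+d+q*s+1) := by rw [hLb]
      omega
    calc (k+1)^(Lb+1) ≤ (2^(k+1))^(Lb+1) :=
          Nat.pow_le_pow_left (le_of_lt Nat.lt_two_pow_self) _
      _ = 2^((k+1)*(Lb+1)) := by rw [← pow_mul]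
      _ < 2^(d*s) := Nat.pow_lt_pow_right one_lt_two harith
      _ = (2^d)^s := pow_mul 2 d s
  obtain ⟨g, g', hgg, hΨ⟩ := Fintype.exists_ne_map_eq_of_card_lt
    (fun g (p : Fin (Lb+1)) => (Φ g)[p.1]?) hcard
  have hΦeq : Φ g = Φ g' := by
    apply List.ext_getElem?
    intro p
    by_cases hp : p < Lb + 1
    · exact congrFun hΨ ⟨p, hp⟩
    · rw [List.getElem?_eq_none_iff.2 (le_trans (hΦlen g) (by omega)),
        List.getElem?_eq_none_iff.2 (le_trans (hΦlen g') (by omega))]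
  -- the witness string x
  obtain ⟨i, hgi⟩ : ∃ i, g i ≠ g' i := by
    by_contra hc
    push_neg at hc
    exact hgg (funext hc)
  set x := Stmt10Aux.bstr i.1 d (g i) with hx
  have hxbin : ∀ a ∈ x, a ≠ (2 : Fin 3) := Stmt10Aux.bstr_binary _ _ _
  have hxlen : x.length = i.1 + 1 + d := Stmt10Aux.bstr_length _ _ _
  have hxu : u g i.1 = x := by
    simp only [hu]
    rw [dif_pos i.2, Fin.eta]
  have hxnot : ∀ t, t < s → u g' t ≠ x := by
    intro t ht hEq
    simp only [hu] at hEq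
    rw [dif_pos ht] at hEq
    obtain ⟨hti, hv⟩ := Stmt10Aux.bstr_inj hEq
    apply hgi
    have : (⟨t, ht⟩ : Fin s) = i := Fin.ext hti
    rw [← this, hv]
    exact congrArg g this
  -- enumeration of {0,1}* avoiding x
  set e' : ℕ → List (Fin 3) :=
    fun t => if Stmt10Aux.enumB t = x then [] else Stmt10Aux.enumB t with he'
  have he'bin : ∀ t, ∀ a ∈ e' t, a ≠ (2 : Fin 3) := by
    intro t
    simp only [he']
    split
    · simp
    · exact Stmt10Aux.enumB_binary t
  have he'ne : ∀ t, e' t ≠ x := by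
    intro t
    simp only [he']
    split
    · intro h0
      have := congrArg List.length h0
      simp [hxlen] at this
    · assumption
  have he'cover : ∀ w, (∀ a ∈ w, a ≠ (2 : Fin 3)) → w ≠ x → ∃ t, e' t = w := by
    intro w hw hwx
    obtain ⟨t, ht⟩ := Stmt10Aux.enumB_surj w hw
    refine ⟨t, ?_⟩
    simp only [he']
    rw [if_neg (by rw [ht]; exact hwx), ht]
  -- the two texts
  set T1 : ℕ → List (Fin 3) :=
    fun t => if h : t < s then u g t else if t = s then x ++ [2] else e' (t - s - 1) with hT1
  set T2 : ℕ → List (Fin 3) :=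
    fun t => if h : t < s then u g' t else if t = s then x ++ [2] else e' (t - s - 1) with hT2
  have hubin : ∀ (g₀ : Fin s → Fin d → Fin 2) t, t < s → ∀ a ∈ u g₀ t, a ≠ (2 : Fin 3) := by
    intro g₀ t ht
    simp only [hu]
    rw [dif_pos ht]
    exact Stmt10Aux.bstr_binary _ _ _
  have hx2x : x ++ [(2 : Fin 3)] ≠ x := by
    intro h0
    have := congrArg List.length h0
    simp at this
  -- T1 is a text for L_{x1}
  have hT1text : IsTextFor T1 (Fam10 (x ++ [(1 : Fin 3)])) := by
    rw [Stmt10Aux.Fam10_concat1]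
    apply Set.Subset.antisymm
    · rintro w ⟨t, rfl⟩
      simp only [hT1]
      split
      · exact Or.inl (hubin g t (by assumption))
      · split
        · exact Or.inr rfl
        · exact Or.inl (he'bin _)
    · rintro w (hw | hw)
      · by_cases hwx : w = x
        · exact ⟨i.1, by simp only [hT1]; rw [dif_pos i.2]; rw [hxu, hwx]⟩
        · obtain ⟨t, ht⟩ := he'cover w hw hwx
          refine ⟨t + s + 1, ?_⟩
          simp only [hT1]
          rw [dif_neg (by omega), if_neg (by omega)]
          have : t + s + 1 - s - 1 = t := by omega
          rw [this, ht]
      · have hw' : w = x ++ [(2 : Fin 3)] := hw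
        refine ⟨s, ?_⟩
        simp only [hT1]
        rw [dif_neg (by omega)]
        simp [hw']
  -- T2 is a text for L_{x0}
  have hT2text : IsTextFor T2 (Fam10 (x ++ [(0 : Fin 3)])) := by
    rw [Stmt10Aux.Fam10_concat0]
    apply Set.Subset.antisymm
    · rintro w ⟨t, rfl⟩
      simp only [hT2]
      split
      · exact ⟨Or.inl (hubin g' t (by assumption)), hxnot t (by assumption)⟩
      · split
        · exact ⟨Or.inr rfl, hx2x⟩
        · exact ⟨Or.inl (he'bin _), he'ne _⟩
    · rintro w ⟨hw | hw, hwx⟩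
      · obtain ⟨t, ht⟩ := he'cover w hw hwx
        refine ⟨t + s + 1, ?_⟩
        simp only [hT2]
        rw [dif_neg (by omega), if_neg (by omega)]
        have : t + s + 1 - s - 1 = t := by omega
        rw [this, ht]
      · have hw' : w = x ++ [(2 : Fin 3)] := hw
        refine ⟨s, ?_⟩
        simp only [hT2]
        rw [dif_neg (by omega)]
        simp [hw']
  -- apply learning
  have hx1I : (x ++ [(1 : Fin 3)]) ∈ I10 := Or.inr ⟨x, hxbin, Or.inr rfl⟩
  have hx0I : (x ++ [(0 : Fin 3)]) ∈ I10 := Or.inr ⟨x, hxbin, Or.inl rfl⟩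
  obtain ⟨e₁, he₁I, he₁L, N₁, hN₁⟩ := hLearn _ hx1I T1 hT1text
  obtain ⟨e₂, he₂I, he₂L, N₂, hN₂⟩ := hLearn _ hx0I T2 hT2text
  have he₁ : e₁ = x ++ [(1 : Fin 3)] :=
    Stmt10Aux.uniq1 x e₁ he₁I (by rw [he₁L, Stmt10Aux.Fam10_concat1])
  have he₂ : e₂ = x ++ [(0 : Fin 3)] :=
    Stmt10Aux.uniq0 x hxbin e₂ he₂I (by rw [he₂L, Stmt10Aux.Fam10_concat0])
  -- the two runs agree from stage s on
  have hT12 : ∀ t, s ≤ t → T1 t = T2 t := by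
    intro t ht
    simp only [hT1, hT2]
    rw [dif_neg (by omega), dif_neg (by omega)]
  have hmembase : M.mem T1 s = M.mem T2 s := by
    have h1 : M.mem T1 s = Φ g := by
      apply Stmt10Aux.mem_congr
      intro t' ht'
      simp only [hT1]
      rw [dif_pos ht']
    have h2 : M.mem T2 s = Φ g' := by
      apply Stmt10Aux.mem_congr
      intro t' ht'
      simp only [hT2]
      rw [dif_pos ht']
    rw [h1, h2, hΦeq]
  have hmem : ∀ j, M.mem T1 (s + j) = M.mem T2 (s + j) := by
    intro j
    induction j with
    | zero => simpa using hmembase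
    | succ j ih =>
      show (M.lstep (M.mem T1 (s+j)) (T1 (s+j))).1 = (M.lstep (M.mem T2 (s+j)) (T2 (s+j))).1
      rw [ih, hT12 (s+j) (by omega)]
  have hhyp : ∀ t, s ≤ t → M.hyp T1 t = M.hyp T2 t := by
    intro t ht
    obtain ⟨j, rfl⟩ : ∃ j, t = s + j := ⟨t - s, by omega⟩
    unfold PLearner.hyp
    rw [hmem j, hT12 _ (by omega)]
  set n := max (max N₁ N₂) s with hn
  have h1 := hN₁ n (by omega)
  have h2 := hN₂ n (by omega)
  rw [he₁] at h1
  rw [he₂] at h2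
  rw [hhyp n (by omega), h2] at h1
  simp at h1
end
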